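/- For all real R > e, D₀ > 0, and all t with 0 ≤ t ≤ (e−1)(ln R − 1)/(2D₀(2e−1)), one has (1 + √(2D₀ t))²/R ≤ exp(2D₀ t − (e−1)(ln R − 1)/(2e−1)). -/
import Mathlib


theorem rate_comparison_real_complex (R D₀ t : ℝ) (hR : Real.exp 1 < R) (hD : 0 < D₀)
    (ht₀ : 0 ≤ t)
    (ht₁ : t ≤ (Real.exp 1 - 1) * (Real.log R - 1) / (2 * D₀ * (2 * Real.exp 1 - 1))) :
    (1 + Real.sqrt (2 * D₀ * t)) ^ 2 / R ≤
      Real.exp (2 * D₀ * t - (Real.exp 1 - 1) * (Real.log R - 1) / (2 * Real.exp 1 - 1)) := by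
  have hR0 : 0 < R := (Real.exp_pos 1).trans hR
  have hE : (1:ℝ) < Real.exp 1 := by
    have := Real.exp_one_gt_d9; linarith
  have hL : 1 < Real.log R := (Real.lt_log_iff_exp_lt hR0).mpr hR
  set c := (Real.exp 1 - 1) * (Real.log R - 1) / (2 * Real.exp 1 - 1) with hcdef
  have hden : 0 < 2 * Real.exp 1 - 1 := by linarith
  have hc1 : 1 + c ≤ Real.log R := by
    have h : (Real.exp 1 - 1) * (Real.log R - 1) / (2 * Real.exp 1 - 1) ≤ Real.log R - 1 := by
      rw [div_le_iff₀ hden]; nlinarith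
    linarith
  set u := Real.sqrt (2 * D₀ * t) with hu
  have h2t : 0 ≤ 2 * D₀ * t := by positivity
  have hu2 : u ^ 2 = 2 * D₀ * t := Real.sq_sqrt h2t
  have hu0 : 0 ≤ u := Real.sqrt_nonneg _
  rw [div_le_iff₀ hR0]
  have hre : Real.exp (2 * D₀ * t - c) * R = Real.exp (2 * D₀ * t - c + Real.log R) := by
    rw [Real.exp_add, Real.exp_log hR0]
  rw [hre]
  calc (1 + u) ^ 2 ≤ Real.exp (u + u) := by
        rw [Real.exp_add]
        have h := Real.add_one_le_exp u
        nlinarith [Real.exp_pos u]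
    _ ≤ Real.exp (2 * D₀ * t - c + Real.log R) := by
        apply Real.exp_le_exp.mpr
        nlinarith [sq_nonneg (u - 1)]
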